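/- Let M_n be the number of Motzkin paths of length n. Then the sequence M_n · n^{3/2} / 3^n converges, as n → ∞, to 3·√3/(2·√π). -/

import Mathlib

open Finset
open scoped Classical

/-- A step: `+1`, `-1` or `0`. -/
abbrev Step : Type := ({1, -1, 0} : Finset ℤ)

/-- Partial sum of the first `k` steps. -/
def psum {n : ℕ} (w : Fin n → Step) (k : ℕ) : ℤ :=
  ∑ i : Fin n, if (i : ℕ) < k then (w i : ℤ) else 0

/-- `w` is a Motzkin path: all partial sums are nonnegative and the total sum is `0`. -/
def IsMotzkin {n : ℕ} (w : Fin n → Step) : Prop :=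
  (∀ k ∈ Finset.range (n + 1), 0 ≤ psum w k) ∧ psum w n = 0

/-- The height of a path: the maximum of its partial sums (`0` for the empty path). -/
def height {n : ℕ} (w : Fin n → Step) : ℤ :=
  (Finset.range (n + 1)).sup' (Finset.nonempty_range_iff.mpr (Nat.succ_ne_zero n)) (psum w)

/-- `w` has a horizontal step at level `j`: some step is `0` and the partial sum up to
and including that step equals `j`. -/
def HasHorizAt {n : ℕ} (w : Fin n → Step) (j : ℤ) : Prop :=
  ∃ i : Fin n, (w i : ℤ) = 0 ∧ psum w ((i : ℕ) + 1) = j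

/-- `M n` is the number of Motzkin paths of length `n`. -/
noncomputable def M (n : ℕ) : ℕ :=
  (Finset.univ.filter fun w : Fin n → Step => IsMotzkin w).card

-- basic step lemmas
lemma step_cases (s : Step) : (s : ℤ) = 1 ∨ (s : ℤ) = -1 ∨ (s : ℤ) = 0 := by
  have := s.2
  simp only [Finset.mem_insert, Finset.mem_singleton] at this
  exact this

def negStep (s : Step) : Step :=
  ⟨-(s : ℤ), by
    rcases step_cases s with h | h | h <;> rw [h] <;> decide⟩

@[simp] lemma negStep_coe (s : Step) : ((negStep s : Step) : ℤ) = -(s : ℤ) := rfl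

@[simp] lemma negStep_negStep (s : Step) : negStep (negStep s) = s := by
  apply Subtype.ext
  simp [negStep]

lemma psum_zero {n : ℕ} (w : Fin n → Step) : psum w 0 = 0 := by
  simp [psum]

lemma psum_succ {n : ℕ} (w : Fin n → Step) {k : ℕ} (hk : k < n) :
    psum w (k + 1) = psum w k + (w ⟨k, hk⟩ : ℤ) := by
  classical
  have h : ∀ i : Fin n, (if (i : ℕ) < k + 1 then (w i : ℤ) else 0)
      = (if (i : ℕ) < k then (w i : ℤ) else 0) + (if i = ⟨k, hk⟩ then (w i : ℤ) else 0) := by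
    intro i
    by_cases hik : i = ⟨k, hk⟩
    · subst hik; simp [Nat.lt_succ_self]
    · have hne : (i : ℕ) ≠ k := fun he => hik (Fin.ext he)
      rw [if_neg hik, add_zero]
      by_cases h2 : (i : ℕ) < k
      · rw [if_pos h2, if_pos (by omega)]
      · rw [if_neg h2, if_neg (by omega)]
  rw [psum, psum]
  calc ∑ i : Fin n, (if (i : ℕ) < k + 1 then (w i : ℤ) else 0)
      = ∑ i : Fin n, ((if (i : ℕ) < k then (w i : ℤ) else 0)
          + (if i = ⟨k, hk⟩ then (w i : ℤ) else 0)) := by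
        exact Finset.sum_congr rfl fun i _ => h i
    _ = _ := by
        rw [Finset.sum_add_distrib, Finset.sum_ite_eq' Finset.univ ⟨k, hk⟩ (fun i => (w i : ℤ))]
        simp

lemma psum_of_le {n : ℕ} (w : Fin n → Step) {k : ℕ} (hk : n ≤ k) : psum w k = psum w n := by
  unfold psum
  refine Finset.sum_congr rfl fun i _ => ?_
  have : (i : ℕ) < n := i.2
  rw [if_pos (lt_of_lt_of_le this hk), if_pos this]

lemma step_bounds (s : Step) : -1 ≤ (s : ℤ) ∧ (s : ℤ) ≤ 1 := by
  rcases step_cases s with h | h | h <;> rw [h] <;> constructor <;> norm_num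

lemma psum_pred {n : ℕ} (w : Fin n → Step) {k : ℕ} (hk : 0 < k) :
    psum w (k - 1) - 1 ≤ psum w k := by
  rcases le_or_gt n (k-1) with h | h
  · rw [psum_of_le w h, psum_of_le w (show n ≤ k by omega)]; omega
  · have heq : k - 1 + 1 = k := by omega
    have h2 := psum_succ w h
    rw [heq] at h2
    have := (step_bounds (w ⟨k-1, h⟩)).1
    omega

/-- If the partial sum ever goes `≤ -1`, it hits `-1` exactly. -/
lemma exists_hit {n : ℕ} (w : Fin n → Step) (h : ∃ m, psum w m ≤ -1) :
    ∃ k, psum w k = -1 := by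
  classical
  obtain ⟨m, hm⟩ := h
  have hex : ∃ k, psum w k ≤ -1 := ⟨m, hm⟩
  set k := Nat.find hex with hk
  have hks : psum w k ≤ -1 := Nat.find_spec hex
  have hkpos : 0 < k := by
    rcases Nat.eq_zero_or_pos k with h0 | h0
    · exfalso; rw [h0] at hks; rw [psum_zero] at hks; omega
    · exact h0
  have hprev : ¬ psum w (k - 1) ≤ -1 := Nat.find_min hex (by omega)
  have := psum_pred w hkpos
  exact ⟨k, by omega⟩

section Reflection
variable {n : ℕ}

/-- first hitting time of level `-1`. -/
noncomputable def tau (w : Fin n → Step) : ℕ :=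
  if h : ∃ k, psum w k = -1 then Nat.find h else 0

lemma tau_spec {w : Fin n → Step} (h : ∃ k, psum w k = -1) : psum w (tau w) = -1 := by
  rw [tau, dif_pos h]; exact Nat.find_spec h

lemma tau_min {w : Fin n → Step} (h : ∃ k, psum w k = -1) {k : ℕ} (hk : k < tau w) :
    psum w k ≠ -1 := by
  rw [tau, dif_pos h] at hk; exact Nat.find_min h hk

lemma tau_le {w : Fin n → Step} (h : ∃ k, psum w k = -1) (hn : psum w n ≠ -1) : tau w ≤ n := by
  by_contra hc
  push_neg at hc
  have := tau_spec h
  rw [psum_of_le w (le_of_lt hc)] at this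
  exact hn this

/-- the reflection of a path after its first visit to `-1`. -/
noncomputable def reflw (w : Fin n → Step) : Fin n → Step :=
  fun i => if (i : ℕ) < tau w then w i else negStep (w i)

lemma psum_reflw_le {w : Fin n → Step} {k : ℕ} (hk : k ≤ tau w) :
    psum (reflw w) k = psum w k := by
  unfold psum
  refine Finset.sum_congr rfl fun i _ => ?_
  by_cases h : (i : ℕ) < k
  · rw [if_pos h, if_pos h, reflw, if_pos (lt_of_lt_of_le h hk)]
  · rw [if_neg h, if_neg h]

lemma psum_reflw_ge {w : Fin n → Step} {k : ℕ} (hk : tau w ≤ k) :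
    psum (reflw w) k = 2 * psum w (tau w) - psum w k := by
  have key : psum (reflw w) k + psum w k = 2 * psum w (tau w) := by
    unfold psum
    rw [← Finset.sum_add_distrib, Finset.mul_sum]
    refine Finset.sum_congr rfl fun i _ => ?_
    by_cases h1 : (i : ℕ) < tau w
    · rw [if_pos (lt_of_lt_of_le h1 hk), if_pos (lt_of_lt_of_le h1 hk), if_pos h1,
        reflw, if_pos h1]
      ring
    · rw [if_neg h1, mul_zero]
      by_cases h2 : (i : ℕ) < k
      · rw [if_pos h2, if_pos h2, reflw, if_neg h1, negStep_coe]; ring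
      · rw [if_neg h2, if_neg h2, add_zero]
  omega

lemma tau_reflw {w : Fin n → Step} (h : ∃ k, psum w k = -1) : tau (reflw w) = tau w := by
  have h1 : psum (reflw w) (tau w) = -1 := by
    rw [psum_reflw_le le_rfl]; exact tau_spec h
  have hex : ∃ k, psum (reflw w) k = -1 := ⟨tau w, h1⟩
  have hle : tau (reflw w) ≤ tau w := by
    rw [tau, dif_pos hex]
    exact Nat.find_le h1
  rcases lt_or_eq_of_le hle with hlt | heq
  · exfalso
    have := tau_spec hex
    rw [psum_reflw_le (le_of_lt hlt)] at this
    exact tau_min h hlt this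
  · exact heq

lemma reflw_reflw {w : Fin n → Step} (h : ∃ k, psum w k = -1) : reflw (reflw w) = w := by
  funext i
  rw [reflw, tau_reflw h, reflw]
  by_cases h1 : (i : ℕ) < tau w
  · rw [if_pos h1, if_pos h1]
  · rw [if_neg h1, if_neg h1, negStep_negStep]

/-- number of words with total sum `h`. -/
noncomputable def Tcard (n : ℕ) (h : ℤ) : ℕ :=
  (Finset.univ.filter fun w : Fin n → Step => psum w n = h).card

lemma hit_of_neg {w : Fin n → Step} {k : ℕ} (hk : psum w k < 0) : ∃ m, psum w m = -1 :=
  exists_hit w ⟨k, by omega⟩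

/-- Reflection principle. -/
lemma M_eq : (M n : ℤ) = (Tcard n 0 : ℤ) - (Tcard n (-2) : ℤ) := by
  classical
  have hsplit : (Finset.univ.filter fun w : Fin n → Step => psum w n = 0)
      = (Finset.univ.filter fun w : Fin n → Step => IsMotzkin w)
        ∪ (Finset.univ.filter fun w : Fin n → Step =>
            psum w n = 0 ∧ ∃ k, psum w k = -1) := by
    ext w
    simp only [Finset.mem_filter, Finset.mem_union, Finset.mem_univ, true_and]
    constructor
    · intro h0
      by_cases hh : ∃ k, psum w k = -1
      · exact Or.inr ⟨h0, hh⟩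
      · push_neg at hh
        refine Or.inl ⟨fun k _ => ?_, h0⟩
        by_contra hneg
        push_neg at hneg
        obtain ⟨m, hm⟩ := hit_of_neg hneg
        exact hh m hm
    · rintro (⟨_, h0⟩ | ⟨h0, _⟩) <;> exact h0
  have hdisj : Disjoint (Finset.univ.filter fun w : Fin n → Step => IsMotzkin w)
      (Finset.univ.filter fun w : Fin n → Step => psum w n = 0 ∧ ∃ k, psum w k = -1) := by
    rw [Finset.disjoint_filter]
    rintro w _ ⟨hpos, hzero⟩ ⟨_, k, hk⟩
    have hkn : k ≤ n := by
      by_contra hc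
      push_neg at hc
      rw [psum_of_le w (le_of_lt hc), hzero] at hk
      norm_num at hk
    have := hpos k (Finset.mem_range.mpr (by omega))
    omega
  have hbij : (Finset.univ.filter fun w : Fin n → Step =>
      psum w n = 0 ∧ ∃ k, psum w k = -1).card = Tcard n (-2) := by
    unfold Tcard
    refine Finset.card_bij' (fun w _ => reflw w) (fun w _ => reflw w) ?_ ?_ ?_ ?_
    · intro w hw
      simp only [Finset.mem_filter, Finset.mem_univ, true_and] at hw ⊢
      obtain ⟨h0, hh⟩ := hw
      have htle : tau w ≤ n := tau_le hh (by rw [h0]; norm_num)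
      rw [psum_reflw_ge htle, tau_spec hh, h0]
      ring
    · intro w hw
      simp only [Finset.mem_filter, Finset.mem_univ, true_and] at hw ⊢
      have hh : ∃ k, psum w k = -1 := exists_hit w ⟨n, by omega⟩
      have htle : tau w ≤ n := tau_le hh (by rw [hw]; norm_num)
      constructor
      · rw [psum_reflw_ge htle, tau_spec hh, hw]; ring
      · exact ⟨tau w, by rw [psum_reflw_le le_rfl]; exact tau_spec hh⟩
    · intro w hw
      simp only [Finset.mem_filter, Finset.mem_univ, true_and] at hw
      exact reflw_reflw hw.2
    · intro w hw
      simp only [Finset.mem_filter, Finset.mem_univ, true_and] at hw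
      have hh : ∃ k, psum w k = -1 := exists_hit w ⟨n, by omega⟩
      exact reflw_reflw hh
  have hM : Tcard n 0 = M n + Tcard n (-2) := by
    unfold Tcard M
    rw [hsplit, Finset.card_union_of_disjoint hdisj, hbij]
    rfl
  rw [hM]
  push_cast
  ring

end Reflection

section Fourier
open Complex intervalIntegral
variable {n : ℕ}

lemma psum_neg (w : Fin n → Step) (k : ℕ) : psum (fun i => negStep (w i)) k = - psum w k := by
  unfold psum
  rw [← Finset.sum_neg_distrib]
  refine Finset.sum_congr rfl fun i _ => ?_
  by_cases h : (i : ℕ) < k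
  · rw [if_pos h, if_pos h, negStep_coe]
  · rw [if_neg h, if_neg h, neg_zero]

lemma Tcard_neg (h : ℤ) : Tcard n (-h) = Tcard n h := by
  unfold Tcard
  refine Finset.card_bij' (fun w _ => fun i => negStep (w i)) (fun w _ => fun i => negStep (w i))
    ?_ ?_ ?_ ?_ <;> intro w hw <;>
    simp only [Finset.mem_filter, Finset.mem_univ, true_and, psum_neg] at hw ⊢
  · omega
  · omega
  · funext i; rw [negStep_negStep]
  · funext i; rw [negStep_negStep]

lemma sum_steps (θ : ℝ) :
    ∑ s : Step, Complex.exp ((s : ℤ) * θ * I) = 1 + 2 * Real.cos θ := by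
  rw [show (Finset.univ : Finset Step) = ({1, -1, 0} : Finset ℤ).attach from rfl,
    Finset.sum_attach ({1, -1, 0} : Finset ℤ) (fun s : ℤ => Complex.exp (s * θ * I))]
  rw [Finset.sum_insert (by decide), Finset.sum_insert (by decide), Finset.sum_singleton]
  push_cast
  rw [one_mul, Complex.exp_mul_I]
  rw [show ((-1 : ℂ)) * θ * I = (-θ : ℝ) * I by push_cast; ring, Complex.exp_mul_I]
  rw [show ((0 : ℂ)) * θ * I = 0 by ring, Complex.exp_zero]
  simp only [Complex.ofReal_neg, Complex.cos_neg, Complex.sin_neg]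
  ring

lemma psum_total (w : Fin n → Step) : psum w n = ∑ i : Fin n, (w i : ℤ) := by
  unfold psum
  exact Finset.sum_congr rfl fun i _ => if_pos i.2

lemma expand_pow (θ : ℝ) :
    ((1 : ℂ) + 2 * Real.cos θ) ^ n
      = ∑ w : Fin n → Step, Complex.exp ((psum w n : ℤ) * θ * I) := by
  rw [← sum_steps θ, Fintype.sum_pow (fun s : Step => Complex.exp ((s : ℤ) * θ * I)) n]
  refine Finset.sum_congr rfl fun w _ => ?_
  rw [← Complex.exp_sum, psum_total]
  congr 1
  push_cast
  rw [Finset.sum_mul, Finset.sum_mul]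

lemma orth (m : ℤ) :
    (∫ θ in (-Real.pi)..Real.pi, Complex.exp (m * θ * I)) = if m = 0 then 2 * Real.pi else 0 := by
  by_cases hm : m = 0
  · subst hm
    simp only [Int.cast_zero, zero_mul, Complex.exp_zero, if_pos]
    rw [intervalIntegral.integral_const]
    simp [Complex.real_smul]
    ring
  · rw [if_neg hm]
    have hc : (m : ℂ) * I ≠ 0 := by
      simp [Complex.ext_iff, hm]
    have key := integral_exp_mul_complex (a := -Real.pi) (b := Real.pi) hc
    simp only [show ∀ θ : ℝ, (m : ℂ) * θ * I = ((m : ℂ) * I) * θ by intros; ring]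
    rw [key]
    have h1 : (m : ℂ) * I * (Real.pi : ℂ) = m * (Real.pi * I) := by ring
    have h2 : (m : ℂ) * I * ((-Real.pi : ℝ) : ℂ) = ((-m : ℤ) : ℂ) * (Real.pi * I) := by
      push_cast; ring
    rw [h1, h2, Complex.exp_int_mul, Complex.exp_int_mul, Complex.exp_pi_mul_I]
    rcases Int.even_or_odd m with he | ho
    · rw [he.neg_one_zpow, (he.neg).neg_one_zpow]
      simp
    · rw [Odd.neg_one_zpow ho, Odd.neg_one_zpow (ho.neg)]
      simp

lemma integral_Tcard (h : ℤ) :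
    (∫ θ in (-Real.pi)..Real.pi,
        ((1 : ℂ) + 2 * Real.cos θ) ^ n * Complex.exp (-(h : ℂ) * θ * I))
      = 2 * Real.pi * (Tcard n h : ℂ) := by
  have hint : ∀ c : ℤ, IntervalIntegrable (fun θ : ℝ => Complex.exp ((c : ℂ) * θ * I))
      MeasureTheory.volume (-Real.pi) Real.pi := by
    intro c
    apply Continuous.intervalIntegrable
    exact Complex.continuous_exp.comp (by fun_prop)
  have hcongr : ∀ θ : ℝ, ((1 : ℂ) + 2 * Real.cos θ) ^ n * Complex.exp (-(h : ℂ) * θ * I)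
      = ∑ w : Fin n → Step, Complex.exp (((psum w n - h : ℤ) : ℂ) * θ * I) := by
    intro θ
    rw [expand_pow θ, Finset.sum_mul]
    refine Finset.sum_congr rfl fun w _ => ?_
    rw [← Complex.exp_add]
    congr 1
    push_cast
    ring
  rw [intervalIntegral.integral_congr (fun θ _ => hcongr θ)]
  rw [intervalIntegral.integral_finset_sum (fun w _ => hint _)]
  have : ∀ w : Fin n → Step,
      (∫ θ in (-Real.pi)..Real.pi, Complex.exp (((psum w n - h : ℤ) : ℂ) * θ * I))
      = if psum w n = h then (2 * Real.pi : ℂ) else 0 := by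
    intro w
    rw [orth (psum w n - h)]
    by_cases hw : psum w n = h
    · rw [if_pos (by omega), if_pos hw]; push_cast; ring
    · rw [if_neg (by omega), if_neg hw]; push_cast; ring
  rw [Finset.sum_congr rfl fun w _ => this w, Finset.sum_ite, Finset.sum_const, Finset.sum_const]
  unfold Tcard
  simp [mul_comm]

lemma key_real :
    Real.pi * (M n : ℝ)
      = ∫ θ in (-Real.pi)..Real.pi, (1 + 2 * Real.cos θ) ^ n * Real.sin θ ^ 2 := by
  have hg : ∀ h : ℤ, IntervalIntegrable
      (fun θ : ℝ => ((1 : ℂ) + 2 * Real.cos θ) ^ n * Complex.exp (-(h : ℂ) * θ * I))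
      MeasureTheory.volume (-Real.pi) Real.pi := by
    intro h
    apply Continuous.intervalIntegrable
    apply Continuous.mul
    · exact (by fun_prop : Continuous fun θ : ℝ => ((1 : ℂ) + 2 * Real.cos θ)).pow n
    · exact Complex.continuous_exp.comp (by fun_prop)
  have point : ∀ θ : ℝ,
      (((1 + 2 * Real.cos θ) ^ n * (4 * Real.sin θ ^ 2) : ℝ) : ℂ)
        = 2 * (((1 : ℂ) + 2 * Real.cos θ) ^ n * Complex.exp (-((0 : ℤ) : ℂ) * θ * I))
          - (((1 : ℂ) + 2 * Real.cos θ) ^ n * Complex.exp (-((2 : ℤ) : ℂ) * θ * I))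
          - (((1 : ℂ) + 2 * Real.cos θ) ^ n * Complex.exp (-((-2 : ℤ) : ℂ) * θ * I)) := by
    intro θ
    have h1 : (-((0 : ℤ) : ℂ)) * θ * I = 0 := by push_cast; ring
    have h2 : (-((2 : ℤ) : ℂ)) * θ * I = ((-2 * θ : ℂ)) * I := by push_cast; ring
    have h3 : (-((-2 : ℤ) : ℂ)) * θ * I = ((2 * θ : ℂ)) * I := by push_cast; ring
    rw [h1, h2, h3, Complex.exp_zero, Complex.exp_mul_I, Complex.exp_mul_I]
    have hc2 : Complex.cos (-2 * θ) = Complex.cos (2 * θ) := by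
      rw [show ((-2 : ℂ) * θ) = -(2 * θ) by ring, Complex.cos_neg]
    have hs2 : Complex.sin (-2 * θ) = -Complex.sin (2 * θ) := by
      rw [show ((-2 : ℂ) * θ) = -(2 * θ) by ring, Complex.sin_neg]
    rw [hc2, hs2, Complex.cos_two_mul']
    have hpyth := Complex.sin_sq_add_cos_sq (θ : ℂ)
    push_cast
    linear_combination (2 * ((1 : ℂ) + 2 * Complex.cos (θ : ℂ)) ^ n) * hpyth
  have big : (∫ θ in (-Real.pi)..Real.pi,
        (((1 + 2 * Real.cos θ) ^ n * (4 * Real.sin θ ^ 2) : ℝ) : ℂ))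
      = 4 * Real.pi * (M n : ℝ) := by
    rw [intervalIntegral.integral_congr (fun θ _ => point θ)]
    rw [intervalIntegral.integral_sub (((hg 0).const_mul 2).sub (hg 2)) (hg (-2)),
      intervalIntegral.integral_sub ((hg 0).const_mul 2) (hg 2),
      intervalIntegral.integral_const_mul, integral_Tcard 0, integral_Tcard 2,
      integral_Tcard (-2)]
    have hT2 : (Tcard n (-2) : ℂ) = (Tcard n 2 : ℂ) := by
      rw [show ((-2 : ℤ)) = -(2 : ℤ) from rfl, Tcard_neg 2]
    have hMeq : (M n : ℂ) = (Tcard n 0 : ℂ) - (Tcard n (-2) : ℂ) := by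
      exact_mod_cast congrArg (fun z : ℤ => (z : ℂ)) (M_eq (n := n))
    push_cast at hMeq hT2 ⊢
    linear_combination (-4 * (Real.pi : ℂ)) * hMeq + (2 * (Real.pi : ℂ)) * hT2
  rw [intervalIntegral.integral_ofReal] at big
  have breal : (∫ θ in (-Real.pi)..Real.pi, (1 + 2 * Real.cos θ) ^ n * (4 * Real.sin θ ^ 2))
      = 4 * Real.pi * (M n : ℝ) := by
    exact_mod_cast big
  have hsplit4 : (∫ θ in (-Real.pi)..Real.pi, (1 + 2 * Real.cos θ) ^ n * (4 * Real.sin θ ^ 2))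
      = 4 * ∫ θ in (-Real.pi)..Real.pi, (1 + 2 * Real.cos θ) ^ n * Real.sin θ ^ 2 := by
    rw [← intervalIntegral.integral_const_mul]
    refine intervalIntegral.integral_congr fun θ _ => ?_
    ring
  rw [hsplit4] at breal
  linarith

end Fourier

section Asymp
open MeasureTheory Filter Real

/-- Rescaled integrand. -/
noncomputable def Fr (n : ℕ) : ℝ → ℝ :=
  (Set.Ioc (-(Real.pi * Real.sqrt n)) (Real.pi * Real.sqrt n)).indicator
    (fun t => ((1 + 2 * Real.cos (t / Real.sqrt n)) / 3) ^ n
      * ((n : ℝ) * Real.sin (t / Real.sqrt n) ^ 2))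

lemma base_bound {θ : ℝ} (hθ : |θ| ≤ Real.pi) :
    |(1 + 2 * Real.cos θ) / 3| ≤ Real.exp (-(θ ^ 2 / 10)) := by
  have hpi : Real.pi < 3.15 := Real.pi_lt_d2
  have hpi0 : 0 < Real.pi := Real.pi_pos
  have hθsq : θ ^ 2 ≤ Real.pi ^ 2 := by
    rw [← sq_abs θ]
    exact pow_le_pow_left₀ (abs_nonneg θ) hθ 2
  have hpisq : Real.pi ^ 2 < 10 := by nlinarith
  by_cases hc : -(1/2 : ℝ) ≤ Real.cos θ
  · have h1 : 0 ≤ (1 + 2 * Real.cos θ) / 3 := by linarith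
    rw [abs_of_nonneg h1]
    have h2 : Real.cos θ ≤ 1 - 2 / Real.pi ^ 2 * θ ^ 2 := Real.cos_le_one_sub_mul_cos_sq hθ
    have h3 : (1 + 2 * Real.cos θ) / 3 ≤ 1 - θ ^ 2 / 10 := by
      have : 2 / Real.pi ^ 2 * θ ^ 2 ≥ 2 / 10 * θ ^ 2 := by
        apply mul_le_mul_of_nonneg_right _ (sq_nonneg θ)
        apply div_le_div_of_nonneg_left (by norm_num) (by positivity) (le_of_lt hpisq)
      nlinarith [sq_nonneg θ]
    calc (1 + 2 * Real.cos θ) / 3 ≤ 1 - θ ^ 2 / 10 := h3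
      _ = 1 + (-(θ ^ 2 / 10)) := by ring
      _ ≤ Real.exp (-(θ ^ 2 / 10)) := by
          linarith [Real.add_one_le_exp (-(θ ^ 2 / 10))]
  · push_neg at hc
    have hcos : -1 ≤ Real.cos θ := Real.neg_one_le_cos θ
    have h1 : |(1 + 2 * Real.cos θ) / 3| ≤ 1 / 3 := by
      rw [abs_le]
      constructor <;> nlinarith
    have h2 : Real.exp (-1 : ℝ) ≤ Real.exp (-(θ ^ 2 / 10)) := by
      apply Real.exp_le_exp.mpr
      nlinarith
    have h3 : (1 : ℝ) / 3 ≤ Real.exp (-1) := by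
      rw [Real.exp_neg]
      rw [div_le_iff₀ (by norm_num), inv_mul_eq_div, le_div_iff₀ (by positivity)]
      have := Real.exp_one_lt_d9
      linarith
    linarith

lemma Fr_bound (n : ℕ) (t : ℝ) : |Fr n t| ≤ t ^ 2 * Real.exp (-(t ^ 2 / 10)) := by
  have hb : 0 ≤ t ^ 2 * Real.exp (-(t ^ 2 / 10)) := by positivity
  unfold Fr
  by_cases hmem : t ∈ Set.Ioc (-(Real.pi * Real.sqrt n)) (Real.pi * Real.sqrt n)
  · rw [Set.indicator_of_mem hmem]
    rcases Nat.eq_zero_or_pos n with rfl | hn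
    · exfalso
      simp only [Nat.cast_zero, Real.sqrt_zero, mul_zero, neg_zero, Set.mem_Ioc] at hmem
      linarith [hmem.1, hmem.2]
    have hsn : 0 < Real.sqrt n := Real.sqrt_pos.mpr (by exact_mod_cast hn)
    set θ := t / Real.sqrt n with hθdef
    have habs : |t| ≤ Real.pi * Real.sqrt n := by
      rw [Set.mem_Ioc] at hmem
      rw [abs_le]; constructor <;> linarith [hmem.1, hmem.2]
    have hθpi : |θ| ≤ Real.pi := by
      rw [hθdef, abs_div, abs_of_pos hsn, div_le_iff₀ hsn]
      exact habs
    have hnθ : (n : ℝ) * θ ^ 2 = t ^ 2 := by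
      rw [hθdef, div_pow, Real.sq_sqrt (Nat.cast_nonneg n)]
      field_simp
    rw [abs_mul, abs_pow]
    have h1 : |(1 + 2 * Real.cos θ) / 3| ^ n ≤ Real.exp (-(t ^ 2 / 10)) := by
      calc |(1 + 2 * Real.cos θ) / 3| ^ n ≤ Real.exp (-(θ ^ 2 / 10)) ^ n :=
            pow_le_pow_left₀ (abs_nonneg _) (base_bound hθpi) n
        _ = Real.exp ((n : ℝ) * (-(θ ^ 2 / 10))) := (Real.exp_nat_mul _ n).symm
        _ = Real.exp (-(t ^ 2 / 10)) := by rw [← hnθ]; ring_nf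
    have h2 : |(n : ℝ) * Real.sin θ ^ 2| ≤ t ^ 2 := by
      rw [abs_of_nonneg (by positivity)]
      calc (n : ℝ) * Real.sin θ ^ 2 ≤ (n : ℝ) * θ ^ 2 := by
            apply mul_le_mul_of_nonneg_left (Real.sin_sq_le_sq) (Nat.cast_nonneg n)
        _ = t ^ 2 := hnθ
    calc |(1 + 2 * Real.cos θ) / 3| ^ n * |(n : ℝ) * Real.sin θ ^ 2|
        ≤ Real.exp (-(t ^ 2 / 10)) * t ^ 2 := by
          apply mul_le_mul h1 h2 (abs_nonneg _) (Real.exp_nonneg _)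
      _ = t ^ 2 * Real.exp (-(t ^ 2 / 10)) := by ring
  · rw [Set.indicator_of_notMem hmem, abs_zero]
    exact hb

lemma tendsto_sin_div : Tendsto (fun s : ℝ => Real.sin s / s) (nhdsWithin 0 {0}ᶜ) (nhds 1) := by
  have h := (Real.hasDerivAt_sin 0)
  rw [Real.cos_zero, hasDerivAt_iff_tendsto_slope] at h
  refine h.congr' ?_
  filter_upwards [self_mem_nhdsWithin] with s hs
  rw [slope_def_field, Real.sin_zero, sub_zero, sub_zero]

lemma tendsto_one_sub_cos :
    Tendsto (fun s : ℝ => (1 - Real.cos s) / s ^ 2) (nhdsWithin 0 {0}ᶜ) (nhds (1/2)) := by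
  have hhalf : Tendsto (fun s : ℝ => s / 2) (nhdsWithin (0:ℝ) {0}ᶜ) (nhdsWithin 0 {0}ᶜ) := by
    rw [tendsto_nhdsWithin_iff]
    constructor
    · have : Tendsto (fun s : ℝ => s / 2) (nhds 0) (nhds (0/2)) :=
        (continuous_id.div_const 2).tendsto 0
      rw [zero_div] at this
      exact this.mono_left nhdsWithin_le_nhds
    · filter_upwards [self_mem_nhdsWithin] with s hs
      simp only [Set.mem_compl_iff, Set.mem_singleton_iff] at hs ⊢
      intro h; exact hs (by linarith [h])
  have hcomp := tendsto_sin_div.comp hhalf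
  have hsq : Tendsto (fun s : ℝ => (Real.sin (s/2) / (s/2)) ^ 2 / 2) (nhdsWithin 0 {0}ᶜ)
      (nhds (1/2)) := by
    have := (hcomp.pow 2).div_const 2
    simpa using this
  refine hsq.congr' ?_
  filter_upwards [self_mem_nhdsWithin] with s hs
  simp only [Set.mem_compl_iff, Set.mem_singleton_iff] at hs
  have h1 : Real.sin (s/2) ^ 2 = (1 - Real.cos s) / 2 := by
    rw [Real.sin_sq_eq_half_sub]
    rw [show 2 * (s/2) = s by ring]
    ring
  rw [div_pow, h1]
  field_simp

lemma tendsto_log_one_sub :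
    Tendsto (fun u : ℝ => Real.log (1 - u) / u) (nhdsWithin 0 {0}ᶜ) (nhds (-1)) := by
  have h1 : HasDerivAt (fun u : ℝ => Real.log (1 - u)) (-1) 0 := by
    have ha : HasDerivAt (fun u : ℝ => 1 - u) (-1) 0 := (hasDerivAt_id 0).const_sub 1
    have hb := Real.hasDerivAt_log (show (1:ℝ) - 0 ≠ 0 by norm_num)
    have := hb.comp 0 ha
    simp only [sub_zero, inv_one, one_mul] at this
    exact this
  rw [hasDerivAt_iff_tendsto_slope] at h1
  refine h1.congr' ?_
  filter_upwards [self_mem_nhdsWithin] with u hu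
  rw [slope_def_field]
  norm_num

lemma Fr_tendsto (t : ℝ) :
    Tendsto (fun n => Fr n t) atTop (nhds (t ^ 2 * Real.exp (-(t ^ 2 / 3)))) := by
  have hsqrt : Tendsto (fun n : ℕ => Real.sqrt n) atTop atTop := by
    rw [tendsto_atTop_atTop]
    intro b
    refine ⟨Nat.ceil (b ^ 2), fun a ha => ?_⟩
    have h1 : (b ^ 2 : ℝ) ≤ (a : ℝ) := by
      calc (b^2 : ℝ) ≤ (Nat.ceil (b^2) : ℝ) := Nat.le_ceil _
        _ ≤ a := by exact_mod_cast ha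
    calc b ≤ |b| := le_abs_self b
      _ = Real.sqrt (b ^ 2) := (Real.sqrt_sq_eq_abs b).symm
      _ ≤ Real.sqrt a := Real.sqrt_le_sqrt h1
  rcases eq_or_ne t 0 with rfl | ht
  · have h0 : ∀ n, Fr n 0 = 0 := by
      intro n
      unfold Fr
      by_cases h : (0:ℝ) ∈ Set.Ioc (-(Real.pi * Real.sqrt n)) (Real.pi * Real.sqrt n)
      · rw [Set.indicator_of_mem h]; simp
      · rw [Set.indicator_of_notMem h]
    simp only [h0]
    simpa using tendsto_const_nhds
  -- main case t ≠ 0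
  set s : ℕ → ℝ := fun n => t / Real.sqrt n with hs_def
  have hev1 : ∀ᶠ n : ℕ in atTop, 0 < Real.sqrt (n:ℝ) := by
    filter_upwards [Filter.eventually_ge_atTop 1] with n hn
    exact Real.sqrt_pos.mpr (by exact_mod_cast hn)
  have hsne : ∀ᶠ n : ℕ in atTop, s n ≠ 0 := by
    filter_upwards [hev1] with n hn
    exact div_ne_zero ht (ne_of_gt hn)
  have hs0 : Tendsto s atTop (nhdsWithin 0 {0}ᶜ) := by
    rw [tendsto_nhdsWithin_iff]
    refine ⟨Tendsto.div_atTop tendsto_const_nhds hsqrt, ?_⟩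
    filter_upwards [hsne] with n hn
    simpa using hn
  have hnsq : ∀ᶠ n : ℕ in atTop, (n : ℝ) * (s n) ^ 2 = t ^ 2 := by
    filter_upwards [hev1] with n hn
    rw [hs_def]
    simp only [div_pow]
    rw [Real.sq_sqrt (by positivity)]
    have hn0 : (n : ℝ) ≠ 0 := ne_of_gt (Real.sqrt_pos.mp hn)
    field_simp
  -- B part
  have hB : Tendsto (fun n : ℕ => (n : ℝ) * Real.sin (s n) ^ 2) atTop (nhds (t ^ 2)) := by
    have hsin := tendsto_sin_div.comp hs0
    have h2 : Tendsto (fun n : ℕ => t ^ 2 * (Real.sin (s n) / s n) ^ 2) atTop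
        (nhds (t ^ 2 * 1 ^ 2)) := tendsto_const_nhds.mul (hsin.pow 2)
    rw [one_pow, mul_one] at h2
    refine h2.congr' ?_
    filter_upwards [hsne, hnsq] with n hn hnq
    have hsn2 : (s n) ^ 2 ≠ 0 := pow_ne_zero 2 hn
    field_simp
    rw [← hnq]
    ring
  -- A part
  set u : ℕ → ℝ := fun n => 2 / 3 * (1 - Real.cos (s n)) with hu_def
  have hnu : Tendsto (fun n : ℕ => (n : ℝ) * u n) atTop (nhds (t ^ 2 / 3)) := by
    have hcos := tendsto_one_sub_cos.comp hs0
    have h2 : Tendsto (fun n : ℕ => 2 / 3 * t ^ 2 * ((1 - Real.cos (s n)) / (s n) ^ 2)) atTop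
        (nhds (2 / 3 * t ^ 2 * (1 / 2))) := tendsto_const_nhds.mul hcos
    have h3 : 2 / 3 * t ^ 2 * (1 / 2 : ℝ) = t ^ 2 / 3 := by ring
    rw [h3] at h2
    refine h2.congr' ?_
    filter_upwards [hsne, hnsq] with n hn hnq
    have hsn2 : (s n) ^ 2 ≠ 0 := pow_ne_zero 2 hn
    rw [hu_def]
    field_simp
    rw [← hnq]
    ring
  have hu0 : Tendsto u atTop (nhds 0) := by
    have hcont : Tendsto (fun x : ℝ => 2 / 3 * (1 - Real.cos x)) (nhds 0) (nhds 0) := by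
      have : Continuous fun x : ℝ => 2 / 3 * (1 - Real.cos x) := by fun_prop
      have h := this.tendsto 0
      simpa using h
    exact hcont.comp (hs0.mono_right nhdsWithin_le_nhds)
  have hsmall : ∀ᶠ n : ℕ in atTop, |s n| < Real.pi := by
    have := hs0.mono_right nhdsWithin_le_nhds
    have habs : Tendsto (fun n => |s n|) atTop (nhds |0|) := this.abs
    rw [abs_zero] at habs
    exact habs.eventually_lt_const Real.pi_pos
  have hune : ∀ᶠ n : ℕ in atTop, u n ≠ 0 := by
    filter_upwards [hsne, hsmall] with n hn hsm
    rw [hu_def]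
    simp only [ne_eq, mul_eq_zero, not_or]
    refine ⟨by norm_num, ?_⟩
    intro h
    have hcos1 : Real.cos (s n) = 1 := by linarith [sub_eq_zero.mp h]
    have h1 : Real.sin (s n / 2) ^ 2 = 0 := by
      rw [Real.sin_sq_eq_half_sub, show 2 * (s n / 2) = s n by ring, hcos1]
      norm_num
    have h2 : Real.sin (s n / 2) = 0 := by
      exact pow_eq_zero_iff (by norm_num) |>.mp h1
    rw [Real.sin_eq_zero_iff_of_lt_of_lt (by cases abs_lt.mp hsm; linarith)
      (by cases abs_lt.mp hsm; linarith)] at h2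
    exact hn (by linarith)
  have hu0' : Tendsto u atTop (nhdsWithin 0 {0}ᶜ) := by
    rw [tendsto_nhdsWithin_iff]
    exact ⟨hu0, by filter_upwards [hune] with n hn; simpa using hn⟩
  have hlog : Tendsto (fun n : ℕ => (n : ℝ) * Real.log (1 - u n)) atTop
      (nhds (-(t ^ 2 / 3))) := by
    have hratio := tendsto_log_one_sub.comp hu0'
    have h2 : Tendsto (fun n : ℕ => ((n : ℝ) * u n) * (Real.log (1 - u n) / u n)) atTop
        (nhds (t ^ 2 / 3 * (-1))) := hnu.mul hratio
    rw [show t ^ 2 / 3 * (-1) = -(t ^ 2 / 3) by ring] at h2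
    refine h2.congr' ?_
    filter_upwards [hune] with n hn
    field_simp
  have hA : Tendsto (fun n : ℕ => ((1 + 2 * Real.cos (s n)) / 3) ^ n) atTop
      (nhds (Real.exp (-(t ^ 2 / 3)))) := by
    have hexp := (Real.continuous_exp.tendsto _).comp hlog
    refine hexp.congr' ?_
    have hlt : ∀ᶠ n : ℕ in atTop, u n < 1 :=
      hu0.eventually_lt_const (by norm_num : (0:ℝ) < 1)
    filter_upwards [hlt] with n hn
    have hpos : 0 < 1 - u n := by linarith
    have hbase : (1 + 2 * Real.cos (s n)) / 3 = 1 - u n := by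
      rw [hu_def]; ring
    show Real.exp ((n : ℝ) * Real.log (1 - u n)) = _
    rw [hbase, ← Real.log_pow, Real.exp_log (by positivity)]
  -- combine
  have hmem : ∀ᶠ n : ℕ in atTop, t ∈ Set.Ioc (-(Real.pi * Real.sqrt n)) (Real.pi * Real.sqrt n) := by
    have : Tendsto (fun n : ℕ => Real.pi * Real.sqrt n) atTop atTop :=
      Tendsto.const_mul_atTop Real.pi_pos hsqrt
    filter_upwards [this.eventually_gt_atTop |t|] with n hn
    rw [Set.mem_Ioc]
    cases abs_lt.mp hn with
    | intro h1 h2 => exact ⟨by linarith, by linarith⟩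
  have hprod : Tendsto (fun n : ℕ => ((1 + 2 * Real.cos (s n)) / 3) ^ n
      * ((n : ℝ) * Real.sin (s n) ^ 2)) atTop
      (nhds (Real.exp (-(t ^ 2 / 3)) * t ^ 2)) := hA.mul hB
  rw [show Real.exp (-(t ^ 2 / 3)) * t ^ 2 = t ^ 2 * Real.exp (-(t ^ 2 / 3)) by ring] at hprod
  refine hprod.congr' ?_
  filter_upwards [hmem] with n hn
  unfold Fr
  rw [Set.indicator_of_mem hn]

lemma bound_integrable : Integrable (fun t : ℝ => t ^ 2 * Real.exp (-(t ^ 2 / 10))) := by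
  have h := integrable_rpow_mul_exp_neg_mul_sq (b := 1/10) (by norm_num) (s := 2) (by norm_num)
  refine h.congr ?_
  filter_upwards with t
  rw [Real.rpow_two]
  ring_nf

lemma gauss_moment : ∫ t : ℝ, t ^ 2 * Real.exp (-(t ^ 2 / 3))
    = 3 * Real.sqrt 3 * Real.sqrt Real.pi / 2 := by
  have habs : (fun t : ℝ => t ^ 2 * Real.exp (-(t ^ 2 / 3)))
      = fun t : ℝ => |t| ^ 2 * Real.exp (-(|t| ^ 2 / 3)) := by
    funext t; rw [sq_abs]
  rw [habs, _root_.integral_comp_abs (f := fun x : ℝ => x ^ 2 * Real.exp (-(x ^ 2 / 3)))]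
  have hval : ∫ x : ℝ in Set.Ioi 0, x ^ 2 * Real.exp (-(x ^ 2 / 3))
      = (3:ℝ) * Real.sqrt 3 * Real.sqrt Real.pi / 4 := by
    have h := integral_rpow_mul_exp_neg_mul_rpow (p := 2) (q := 2) (b := 1/3)
      (by norm_num) (by norm_num) (by norm_num)
    have hcongr : ∫ x : ℝ in Set.Ioi 0, x ^ (2:ℝ) * Real.exp (-(1/3) * x ^ (2:ℝ))
        = ∫ x : ℝ in Set.Ioi 0, x ^ 2 * Real.exp (-(x ^ 2 / 3)) := by
      refine MeasureTheory.setIntegral_congr_fun measurableSet_Ioi (fun x hx => ?_)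
      rw [show ((2:ℝ)) = ((2:ℕ):ℝ) by norm_num, Real.rpow_natCast]
      ring_nf
    rw [hcongr] at h
    rw [h]
    have hgamma : Real.Gamma ((2 + 1) / 2) = Real.sqrt Real.pi / 2 := by
      rw [show ((2 + 1) / 2 : ℝ) = 1/2 + 1 by norm_num, Real.Gamma_add_one (by norm_num),
        Real.Gamma_one_half_eq]
      ring
    rw [hgamma]
    have hb : ((1:ℝ)/3) ^ (-(2 + 1) / 2 : ℝ) = 3 * Real.sqrt 3 := by
      rw [show (-(2 + 1) / 2 : ℝ) = -(3/2) by norm_num, Real.rpow_neg (by norm_num),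
        one_div, Real.inv_rpow (by norm_num), inv_inv]
      rw [show ((3:ℝ)/2) = (1 + 1/2 : ℝ) by norm_num, Real.rpow_add (by norm_num),
        Real.rpow_one, ← Real.sqrt_eq_rpow]
    rw [hb]
    ring
  rw [hval]
  ring

lemma Fr_integral_tendsto :
    Tendsto (fun n : ℕ => ∫ t : ℝ, Fr n t) atTop
      (nhds (3 * Real.sqrt 3 * Real.sqrt Real.pi / 2)) := by
  have hmeas : ∀ n : ℕ, AEStronglyMeasurable (Fr n) MeasureTheory.volume := by
    intro n
    apply AEStronglyMeasurable.indicator _ measurableSet_Ioc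
    apply Continuous.aestronglyMeasurable
    fun_prop
  have hlim := MeasureTheory.tendsto_integral_of_dominated_convergence
    (F := Fr) (f := fun t => t ^ 2 * Real.exp (-(t ^ 2 / 3)))
    (bound := fun t => t ^ 2 * Real.exp (-(t ^ 2 / 10)))
    hmeas bound_integrable
    (fun n => Filter.Eventually.of_forall fun t => by
      simpa [Real.norm_eq_abs] using Fr_bound n t)
    (Filter.Eventually.of_forall fun t => Fr_tendsto t)
  rwa [gauss_moment] at hlim

lemma Fr_integral_eq (n : ℕ) (hn : 1 ≤ n) :
    ∫ t : ℝ, Fr n t = Real.pi * ((M n : ℝ) * (n : ℝ) ^ ((3:ℝ)/2) / 3 ^ n) := by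
  have hsn : 0 < Real.sqrt n := Real.sqrt_pos.mpr (by exact_mod_cast hn)
  have hle : -(Real.pi * Real.sqrt n) ≤ Real.pi * Real.sqrt n := by
    have : 0 < Real.pi * Real.sqrt n := by positivity
    linarith
  have h1 : ∫ t : ℝ, Fr n t = ∫ t in (-(Real.pi * Real.sqrt n))..(Real.pi * Real.sqrt n),
      ((1 + 2 * Real.cos (t / Real.sqrt n)) / 3) ^ n
        * ((n : ℝ) * Real.sin (t / Real.sqrt n) ^ 2) := by
    rw [intervalIntegral.integral_of_le hle, ← MeasureTheory.integral_indicator measurableSet_Ioc]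
    rfl
  have h2 : ∀ t : ℝ, ((1 + 2 * Real.cos (t / Real.sqrt n)) / 3) ^ n
        * ((n : ℝ) * Real.sin (t / Real.sqrt n) ^ 2)
      = ((n : ℝ) / 3 ^ n) * ((1 + 2 * Real.cos (t / Real.sqrt n)) ^ n
        * Real.sin (t / Real.sqrt n) ^ 2) := by
    intro t
    rw [div_pow]
    ring
  have h3 : (∫ t in (-(Real.pi * Real.sqrt n))..(Real.pi * Real.sqrt n),
        ((1 + 2 * Real.cos (t / Real.sqrt n)) ^ n * Real.sin (t / Real.sqrt n) ^ 2))
      = Real.sqrt n • ∫ θ in (-Real.pi)..Real.pi, (1 + 2 * Real.cos θ) ^ n * Real.sin θ ^ 2 := by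
    have := intervalIntegral.integral_comp_div (a := -(Real.pi * Real.sqrt n))
      (b := Real.pi * Real.sqrt n) (c := Real.sqrt n)
      (f := fun θ => (1 + 2 * Real.cos θ) ^ n * Real.sin θ ^ 2) (ne_of_gt hsn)
    have e1 : -(Real.pi * Real.sqrt n) / Real.sqrt n = -Real.pi := by field_simp
    have e2 : (Real.pi * Real.sqrt n) / Real.sqrt n = Real.pi := by field_simp
    rw [e1, e2] at this
    rw [this]
  calc ∫ t : ℝ, Fr n t
      = ∫ t in (-(Real.pi * Real.sqrt n))..(Real.pi * Real.sqrt n),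
          ((1 + 2 * Real.cos (t / Real.sqrt n)) / 3) ^ n
            * ((n : ℝ) * Real.sin (t / Real.sqrt n) ^ 2) := h1
    _ = ((n : ℝ) / 3 ^ n) * ∫ t in (-(Real.pi * Real.sqrt n))..(Real.pi * Real.sqrt n),
          ((1 + 2 * Real.cos (t / Real.sqrt n)) ^ n * Real.sin (t / Real.sqrt n) ^ 2) := by
        rw [← intervalIntegral.integral_const_mul]
        exact intervalIntegral.integral_congr fun t _ => h2 t
    _ = ((n : ℝ) / 3 ^ n) * (Real.sqrt n * (Real.pi * (M n : ℝ))) := by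
        rw [h3, ← key_real, smul_eq_mul]
    _ = Real.pi * ((M n : ℝ) * (n : ℝ) ^ ((3:ℝ)/2) / 3 ^ n) := by
        have hpow : (n : ℝ) ^ ((3:ℝ)/2) = (n : ℝ) * Real.sqrt n := by
          rw [show ((3:ℝ)/2) = 1 + 1/2 by norm_num,
            Real.rpow_add (by positivity), Real.rpow_one, ← Real.sqrt_eq_rpow]
        rw [hpow]
        field_simp

end Asymp
open Filter in
/-- `M n · n^{3/2} / 3^n → 3√3 / (2√π)`. -/
theorem motzkin_asymptotics :
    Tendsto (fun n : ℕ => (M n : ℝ) * (n : ℝ) ^ ((3 : ℝ) / 2) / 3 ^ n) atTop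
      (nhds (3 * Real.sqrt 3 / (2 * Real.sqrt Real.pi))) := by
  have hπ : (0:ℝ) < Real.pi := Real.pi_pos
  have h2 : Tendsto (fun n : ℕ => (1/Real.pi) * ∫ t : ℝ, Fr n t) atTop
      (nhds ((1/Real.pi) * (3 * Real.sqrt 3 * Real.sqrt Real.pi / 2))) :=
    tendsto_const_nhds.mul Fr_integral_tendsto
  have hval : (1/Real.pi) * (3 * Real.sqrt 3 * Real.sqrt Real.pi / 2)
      = 3 * Real.sqrt 3 / (2 * Real.sqrt Real.pi) := by
    have hsq : Real.sqrt Real.pi * Real.sqrt Real.pi = Real.pi := Real.mul_self_sqrt hπ.le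
    have h0 : Real.sqrt Real.pi ≠ 0 := by positivity
    field_simp
    linear_combination hsq
  rw [hval] at h2
  refine Filter.Tendsto.congr' ?_ h2
  filter_upwards [Filter.eventually_ge_atTop 1] with n hn
  rw [Fr_integral_eq n hn]
  field_simp
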